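/- Let F be an abelian field of conductor f and c an odd integer coprime to f. Then the twisted Stickelberger element θ_F^c = (1 - c·σ_c^{-1})·θ_F lies in ℤ[G_F], i.e. has integral coefficients. -/

import Mathlib

/-- The normalized Stickelberger element `θ_F = -∑'_{0<a<f} (1/2 - a/f)·σ_a⁻¹` of an abelian
field `F` with Galois group `G` and conductor `f`, where the Artin symbol `a ↦ σ_a = (F/a)`
is encoded as a homomorphism `σ : (ZMod f)ˣ →* G`. -/
noncomputable def stickelberger (f : ℕ) [NeZero f] {G : Type*} [CommGroup G]
    (σ : (ZMod f)ˣ →* G) : MonoidAlgebra ℚ G :=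
  -∑ a : (ZMod f)ˣ,
    MonoidAlgebra.single ((σ a)⁻¹) ((1 : ℚ) / 2 - (((a : ZMod f).val : ℚ)) / (f : ℚ))

/-- `σ` is the Artin map of an abelian field whose conductor is exactly `f`: it is surjective
and does not factor through `(ZMod d)ˣ` for any proper divisor `d` of `f`. -/
def IsConductor (f : ℕ) [NeZero f] {G : Type*} [CommGroup G] (σ : (ZMod f)ˣ →* G) : Prop :=
  Function.Surjective σ ∧
    ∀ (d : ℕ) (hd : d ∣ f), (∀ a : (ZMod f)ˣ, ZMod.unitsMap hd a = 1 → σ a = 1) → d = f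


private lemma stickelberger_apply (f : ℕ) [NeZero f] {G : Type*} [CommGroup G] [DecidableEq G]
    (σ : (ZMod f)ˣ →* G) (g : G) :
    (stickelberger f σ).coeff g =
      -∑ a : (ZMod f)ˣ,
        if (σ a)⁻¹ = g then ((1 : ℚ) / 2 - (((a : ZMod f).val : ℚ)) / (f : ℚ)) else 0 := by
  rw [stickelberger, MonoidAlgebra.coeff_neg, Finsupp.neg_apply, MonoidAlgebra.coeff_sum,
    Finset.sum_apply']
  congr 1
  exact Finset.sum_congr rfl fun a _ => Finsupp.single_apply

private lemma stickelberger_key (f c v w k m : ℕ) (hf : (f : ℚ) ≠ 0) (hc : c = 2 * m + 1)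
    (h : c * v = f * k + w) :
    (c : ℚ) * (1 / 2 - v / f) - (1 / 2 - w / f) = (m : ℚ) - k := by
  have h' : (c : ℚ) * v = f * k + w := by exact_mod_cast h
  have hc' : (c : ℚ) = 2 * m + 1 := by exact_mod_cast hc
  have hw : (w : ℚ) = c * v - f * k := by linarith
  rw [hw, hc']
  field_simp
  ring

/-- For `c` odd and coprime to `f`, the twisted Stickelberger element
`θ_F^c = (1 - c·σ_c⁻¹)·θ_F` has integral coefficients, i.e. lies in `ℤ[G_F]`. -/
theorem twisted_stickelberger_integral (f : ℕ) [NeZero f] (hf : 1 < f) {G : Type*} [CommGroup G]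
    (σ : (ZMod f)ˣ →* G) (hcond : IsConductor f σ) (c : ℕ) (hodd : Odd c)
    (hc : Nat.Coprime c f) :
    ∀ g : G, ∃ n : ℤ,
      ((((1 : MonoidAlgebra ℚ G) -
          (c : ℚ) • MonoidAlgebra.single ((σ (ZMod.unitOfCoprime c hc))⁻¹) 1) *
        stickelberger f σ : MonoidAlgebra ℚ G).coeff : G →₀ ℚ) g = (n : ℚ) := by
  intro g
  classical
  obtain ⟨m, hm⟩ := hodd
  set u := ZMod.unitOfCoprime c hc with hu
  set s := σ u with hs
  have hf0 : (f : ℚ) ≠ 0 := Nat.cast_ne_zero.mpr (NeZero.ne f)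
  refine ⟨∑ b : (ZMod f)ˣ, if (σ b)⁻¹ = s * g then
      (m : ℤ) - ((c * (b : ZMod f).val) / f : ℕ) else 0, ?_⟩
  rw [sub_mul, one_mul, smul_mul_assoc]
  rw [MonoidAlgebra.coeff_sub, Finsupp.sub_apply, MonoidAlgebra.coeff_smul, Finsupp.smul_apply,
    MonoidAlgebra.coeff_single_mul_apply, inv_inv, one_mul,
    stickelberger_apply, stickelberger_apply]
  -- reindex the first sum by b ↦ u * b
  have hre : (∑ a : (ZMod f)ˣ, if (σ a)⁻¹ = g then
        ((1 : ℚ)/2 - (((a : ZMod f).val : ℚ))/(f : ℚ)) else 0) =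
      ∑ b : (ZMod f)ˣ, if (σ b)⁻¹ = s * g then
        ((1 : ℚ)/2 - ((((u * b : (ZMod f)ˣ) : ZMod f).val : ℚ))/(f : ℚ)) else 0 := by
    refine Fintype.sum_equiv (Equiv.mulLeft u).symm _ _ fun a => ?_
    simp only [Equiv.mulLeft_symm, Equiv.coe_mulLeft, mul_inv_cancel_left, map_mul, map_inv,
      mul_inv, inv_inv, ← hs, mul_right_inj]
  rw [hre, smul_neg, smul_eq_mul, sub_neg_eq_add, neg_add_eq_sub, Finset.mul_sum,
    ← Finset.sum_sub_distrib, Int.cast_sum]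
  refine Finset.sum_congr rfl fun b _ => ?_
  have hval : ((u * b : (ZMod f)ˣ) : ZMod f).val = c * (b : ZMod f).val % f := by
    rw [Units.val_mul, hu, ZMod.coe_unitOfCoprime, ZMod.val_mul, ZMod.val_natCast,
      Nat.mod_mul_mod]
  split_ifs with hP
  · have := stickelberger_key f c ((b : ZMod f).val) ((u * b : (ZMod f)ˣ) : ZMod f).val
      (c * (b : ZMod f).val / f) m hf0 hm
      (by rw [hval]; exact (Nat.div_add_mod _ _).symm)
    rw [this]
    norm_cast
  · simp
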